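/- Let q ∈ ℝ with q ≠ 0, and let A_q be the universal unital ℝ-algebra with generators a, a', b, c and relations a·a' = 1, a'·a = 1, a·b = q • (b·a), a·c = q • (c·a), b·c = c·b (i.e., the quotient of the free ℝ-algebra on four generators by the two-sided ideal generated by these relations; thus a is a unit with inverse a'). Then the family { a^i · b^j · c^k : i ∈ ℤ, j ∈ ℕ, k ∈ ℕ } (where a^i for negative i means (a')^{−i}) is a basis of A_q as an ℝ-vector space; equivalently, the ℝ-linear map from the free ℝ-module on ℤ × ℕ × ℕ to A_q sending the basis vector at (i, j, k) to a^i · b^j · c^k is bijective. -/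

import Mathlib

open FreeAlgebra

/-- The defining relations of the algebra `A_q`: generators `a = X 0`, `a' = X 1`,
`b = X 2`, `c = X 3`, with `a·a' = 1`, `a'·a = 1`, `a·b = q • (b·a)`, `a·c = q • (c·a)`,
`b·c = c·b`. -/
inductive AqRel (q : ℝ) : FreeAlgebra ℝ (Fin 4) → FreeAlgebra ℝ (Fin 4) → Prop
  | inv_right : AqRel q (ι ℝ 0 * ι ℝ 1) 1
  | inv_left : AqRel q (ι ℝ 1 * ι ℝ 0) 1
  | ab : AqRel q (ι ℝ 0 * ι ℝ 2) (q • (ι ℝ 2 * ι ℝ 0))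
  | ac : AqRel q (ι ℝ 0 * ι ℝ 3) (q • (ι ℝ 3 * ι ℝ 0))
  | bc : AqRel q (ι ℝ 2 * ι ℝ 3) (ι ℝ 3 * ι ℝ 2)

/-- The universal algebra `A_q`. -/
noncomputable abbrev Aq (q : ℝ) : Type := RingQuot (AqRel q)

/-- The generator `a` of `A_q` as a unit, with inverse `a'`. -/
noncomputable def aUnit (q : ℝ) : (Aq q)ˣ where
  val := RingQuot.mkAlgHom ℝ (AqRel q) (ι ℝ 0)
  inv := RingQuot.mkAlgHom ℝ (AqRel q) (ι ℝ 1)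
  val_inv := by
    rw [← map_mul, ← map_one (RingQuot.mkAlgHom ℝ (AqRel q))]
    exact RingQuot.mkAlgHom_rel ℝ AqRel.inv_right
  inv_val := by
    rw [← map_mul, ← map_one (RingQuot.mkAlgHom ℝ (AqRel q))]
    exact RingQuot.mkAlgHom_rel ℝ AqRel.inv_left

namespace AqAux

variable (q : ℝ)

noncomputable abbrev mk : FreeAlgebra ℝ (Fin 4) →ₐ[ℝ] Aq q := RingQuot.mkAlgHom ℝ (AqRel q)
noncomputable abbrev aE (i : ℤ) : Aq q := ((aUnit q ^ i : (Aq q)ˣ) : Aq q)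
noncomputable abbrev bE : Aq q := mk q (ι ℝ 2)
noncomputable abbrev cE : Aq q := mk q (ι ℝ 3)

lemma rel_ab : ((aUnit q : Aq q)) * bE q = q • (bE q * (aUnit q : Aq q)) := by
  have := RingQuot.mkAlgHom_rel ℝ (AqRel.ab (q := q))
  simp [map_mul] at this; exact this

lemma rel_ac : ((aUnit q : Aq q)) * cE q = q • (cE q * (aUnit q : Aq q)) := by
  have := RingQuot.mkAlgHom_rel ℝ (AqRel.ac (q := q))
  simp [map_mul] at this; exact this

lemma rel_bc : bE q * cE q = cE q * bE q := by
  have := RingQuot.mkAlgHom_rel ℝ (AqRel.bc (q := q))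
  simpa [map_mul] using this

variable {q}

lemma b_mul_a (hq : q ≠ 0) :
    bE q * (aUnit q : Aq q) = q⁻¹ • ((aUnit q : Aq q) * bE q) := by
  rw [rel_ab, smul_smul, inv_mul_cancel₀ hq, one_smul]

lemma c_mul_a (hq : q ≠ 0) :
    cE q * (aUnit q : Aq q) = q⁻¹ • ((aUnit q : Aq q) * cE q) := by
  rw [rel_ac, smul_smul, inv_mul_cancel₀ hq, one_smul]

lemma b_mul_ainv :
    bE q * (((aUnit q)⁻¹ : (Aq q)ˣ) : Aq q)
      = q • ((((aUnit q)⁻¹ : (Aq q)ˣ) : Aq q) * bE q) := by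
  set u := aUnit q
  calc bE q * ↑u⁻¹ = ↑u⁻¹ * ↑u * bE q * ↑u⁻¹ := by rw [Units.inv_mul, one_mul]
    _ = ↑u⁻¹ * (↑u * bE q) * ↑u⁻¹ := by rw [mul_assoc (↑u⁻¹ : Aq q)]
    _ = ↑u⁻¹ * (q • (bE q * ↑u)) * ↑u⁻¹ := by rw [rel_ab]
    _ = q • (↑u⁻¹ * bE q * (↑u * ↑u⁻¹)) := by
        simp only [mul_smul_comm, smul_mul_assoc, mul_assoc]
    _ = q • (↑u⁻¹ * bE q) := by rw [Units.mul_inv, mul_one]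

lemma c_mul_ainv :
    cE q * (((aUnit q)⁻¹ : (Aq q)ˣ) : Aq q)
      = q • ((((aUnit q)⁻¹ : (Aq q)ˣ) : Aq q) * cE q) := by
  set u := aUnit q
  calc cE q * ↑u⁻¹ = ↑u⁻¹ * ↑u * cE q * ↑u⁻¹ := by rw [Units.inv_mul, one_mul]
    _ = ↑u⁻¹ * (↑u * cE q) * ↑u⁻¹ := by rw [mul_assoc (↑u⁻¹ : Aq q)]
    _ = ↑u⁻¹ * (q • (cE q * ↑u)) * ↑u⁻¹ := by rw [rel_ac]
    _ = q • (↑u⁻¹ * cE q * (↑u * ↑u⁻¹)) := by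
        simp only [mul_smul_comm, smul_mul_assoc, mul_assoc]
    _ = q • (↑u⁻¹ * cE q) := by rw [Units.mul_inv, mul_one]

lemma aE_zero : aE q 0 = 1 :=
  (congrArg Units.val (zpow_zero (aUnit q))).trans Units.val_one

lemma aE_add_one (i : ℤ) : aE q (i + 1) = aE q i * (aUnit q : Aq q) :=
  (congrArg Units.val (zpow_add_one (aUnit q) i)).trans (Units.val_mul _ _)

lemma aE_sub_one (i : ℤ) :
    aE q (i - 1) = aE q i * (((aUnit q)⁻¹ : (Aq q)ˣ) : Aq q) :=
  (congrArg Units.val (zpow_sub_one (aUnit q) i)).trans (Units.val_mul _ _)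

lemma aE_one_add (i : ℤ) : aE q (1 + i) = (aUnit q : Aq q) * aE q i :=
  (congrArg Units.val ((zpow_add (aUnit q) 1 i).trans (by rw [zpow_one]))).trans
    (Units.val_mul _ _)

lemma aE_neg_one_add (i : ℤ) :
    aE q (-1 + i) = (((aUnit q)⁻¹ : (Aq q)ˣ) : Aq q) * aE q i :=
  (congrArg Units.val ((zpow_add (aUnit q) (-1) i).trans (by rw [zpow_neg_one]))).trans
    (Units.val_mul _ _)

lemma b_mul_aE (hq : q ≠ 0) (i : ℤ) :
    bE q * aE q i = (q ^ i)⁻¹ • (aE q i * bE q) := by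
  induction i using Int.induction_on with
  | zero => simp [aE_zero]
  | succ n ih =>
      rw [aE_add_one, ← mul_assoc, ih, smul_mul_assoc, mul_assoc, b_mul_a hq,
        mul_smul_comm, smul_smul, zpow_add_one₀ hq, mul_inv, mul_assoc]
  | pred n ih =>
      rw [show (-(n:ℤ) - 1) = (-(n:ℤ)) - 1 from rfl, aE_sub_one, ← mul_assoc, ih,
        smul_mul_assoc, mul_assoc, b_mul_ainv, mul_smul_comm, smul_smul,
        zpow_sub_one₀ hq, mul_inv, inv_inv, mul_assoc]

lemma c_mul_aE (hq : q ≠ 0) (i : ℤ) :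
    cE q * aE q i = (q ^ i)⁻¹ • (aE q i * cE q) := by
  induction i using Int.induction_on with
  | zero => simp [aE_zero]
  | succ n ih =>
      rw [aE_add_one, ← mul_assoc, ih, smul_mul_assoc, mul_assoc, c_mul_a hq,
        mul_smul_comm, smul_smul, zpow_add_one₀ hq, mul_inv, mul_assoc]
  | pred n ih =>
      rw [show (-(n:ℤ) - 1) = (-(n:ℤ)) - 1 from rfl, aE_sub_one, ← mul_assoc, ih,
        smul_mul_assoc, mul_assoc, c_mul_ainv, mul_smul_comm, smul_smul,
        zpow_sub_one₀ hq, mul_inv, inv_inv, mul_assoc]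

variable (q)

noncomputable def mono (p : ℤ × ℕ × ℕ) : Aq q :=
  aE q p.1 * bE q ^ p.2.1 * cE q ^ p.2.2

lemma a_mul_mono (i : ℤ) (j k : ℕ) :
    (aUnit q : Aq q) * mono q (i, j, k) = mono q (i + 1, j, k) := by
  simp only [mono, add_comm i 1, aE_one_add, mul_assoc]

lemma ainv_mul_mono (i : ℤ) (j k : ℕ) :
    (((aUnit q)⁻¹ : (Aq q)ˣ) : Aq q) * mono q (i, j, k) = mono q (i - 1, j, k) := by
  simp only [mono, show i - 1 = -1 + i by ring, aE_neg_one_add, mul_assoc]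

lemma b_mul_mono (hq : q ≠ 0) (i : ℤ) (j k : ℕ) :
    bE q * mono q (i, j, k) = (q ^ i)⁻¹ • mono q (i, j + 1, k) := by
  simp only [mono, ← mul_assoc, b_mul_aE hq, smul_mul_assoc]
  rw [mul_assoc (aE q i), ← pow_succ']

lemma c_mul_mono (hq : q ≠ 0) (i : ℤ) (j k : ℕ) :
    cE q * mono q (i, j, k) = (q ^ i)⁻¹ • mono q (i, j, k + 1) := by
  have hcb : Commute (cE q) (bE q) := (rel_bc q).symm
  simp only [mono, ← mul_assoc, c_mul_aE hq, smul_mul_assoc]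
  rw [mul_assoc (aE q i), (hcb.pow_right j).eq, ← mul_assoc, mul_assoc _ (cE q), ← pow_succ']

end AqAux

namespace AqAux

open Finsupp

abbrev V : Type := ℤ × ℕ × ℕ →₀ ℝ

noncomputable def shOp (f : ℤ × ℕ × ℕ → ℤ × ℕ × ℕ) (c : ℤ × ℕ × ℕ → ℝ) :
    Module.End ℝ V :=
  Finsupp.lsum ℝ fun p => c p • Finsupp.lsingle (f p)

lemma shOp_single (f : ℤ × ℕ × ℕ → ℤ × ℕ × ℕ) (c : ℤ × ℕ × ℕ → ℝ)
    (p : ℤ × ℕ × ℕ) (r : ℝ) :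
    shOp f c (Finsupp.single p r) = Finsupp.single (f p) (c p * r) := by
  simp [shOp, Finsupp.smul_single]

variable (q : ℝ)

noncomputable def AqF : Fin 4 → Module.End ℝ V :=
  ![shOp (fun p => (p.1 + 1, p.2)) (fun _ => 1),
    shOp (fun p => (p.1 - 1, p.2)) (fun _ => 1),
    shOp (fun p => (p.1, p.2.1 + 1, p.2.2)) (fun p => q ^ (-p.1)),
    shOp (fun p => (p.1, p.2.1, p.2.2 + 1)) (fun p => q ^ (-p.1))]

lemma F01 : AqF q 0 * AqF q 1 = 1 := by
  apply Finsupp.lhom_ext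
  intro p r
  simp [AqF, Module.End.mul_apply, shOp_single]

lemma F10 : AqF q 1 * AqF q 0 = 1 := by
  apply Finsupp.lhom_ext
  intro p r
  simp [AqF, Module.End.mul_apply, shOp_single]

variable {q}

lemma F02 (hq : q ≠ 0) : AqF q 0 * AqF q 2 = q • (AqF q 2 * AqF q 0) := by
  apply Finsupp.lhom_ext
  intro p r
  simp only [AqF, Module.End.mul_apply, LinearMap.smul_apply, shOp_single,
    Matrix.cons_val_zero, Matrix.cons_val_two, Matrix.tail_cons, Matrix.head_cons,
    Finsupp.smul_single, smul_eq_mul, one_mul]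
  congr 1
  rw [show -p.1 = -(p.1+1) + 1 by ring, zpow_add_one₀ hq]
  ring

lemma F03 (hq : q ≠ 0) : AqF q 0 * AqF q 3 = q • (AqF q 3 * AqF q 0) := by
  apply Finsupp.lhom_ext
  intro p r
  simp only [AqF, Module.End.mul_apply, LinearMap.smul_apply, shOp_single,
    Matrix.cons_val_zero, Matrix.cons_val_three, Matrix.tail_cons, Matrix.head_cons,
    Finsupp.smul_single, smul_eq_mul, one_mul]
  congr 1
  rw [show -p.1 = -(p.1+1) + 1 by ring, zpow_add_one₀ hq]
  ring

lemma F23 : AqF q 2 * AqF q 3 = AqF q 3 * AqF q 2 := by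
  apply Finsupp.lhom_ext
  intro p r
  simp only [AqF, Module.End.mul_apply, shOp_single,
    Matrix.cons_val_two, Matrix.cons_val_three, Matrix.tail_cons, Matrix.head_cons]

noncomputable def rho (hq : q ≠ 0) : Aq q →ₐ[ℝ] Module.End ℝ V :=
  RingQuot.liftAlgHom ℝ ⟨FreeAlgebra.lift ℝ (AqF q), by
    rintro x y ⟨⟩ <;>
      simp only [map_mul, map_smul, map_one, FreeAlgebra.lift_ι_apply]
    · exact F01 q
    · exact F10 q
    · exact F02 hq
    · exact F03 hq
    · exact F23⟩

lemma rho_mk (hq : q ≠ 0) (x : FreeAlgebra ℝ (Fin 4)) :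
    rho hq (mk q x) = FreeAlgebra.lift ℝ (AqF q) x :=
  RingQuot.liftAlgHom_mkAlgHom_apply _ _ _ _

end AqAux

namespace AqAux

open Finsupp

variable {q : ℝ}

lemma rho_b (hq : q ≠ 0) : rho hq (bE q) = AqF q 2 := by
  rw [rho_mk hq, FreeAlgebra.lift_ι_apply]

lemma rho_c (hq : q ≠ 0) : rho hq (cE q) = AqF q 3 := by
  rw [rho_mk hq, FreeAlgebra.lift_ι_apply]

lemma rho_a (hq : q ≠ 0) : rho hq ((aUnit q : Aq q)) = AqF q 0 := by
  rw [show ((aUnit q : Aq q)) = mk q (ι ℝ 0) from rfl, rho_mk hq, FreeAlgebra.lift_ι_apply]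

lemma rho_ainv (hq : q ≠ 0) :
    rho hq ((((aUnit q)⁻¹ : (Aq q)ˣ)) : Aq q) = AqF q 1 := by
  rw [show ((((aUnit q)⁻¹ : (Aq q)ˣ)) : Aq q) = mk q (ι ℝ 1) from rfl, rho_mk hq,
    FreeAlgebra.lift_ι_apply]

lemma rho_aE_single (hq : q ≠ 0) (i : ℤ) (m : ℤ) (jk : ℕ × ℕ) (r : ℝ) :
    rho hq (aE q i) (Finsupp.single (m, jk) r) = Finsupp.single (m + i, jk) r := by
  induction i using Int.induction_on generalizing m with
  | zero => simp [aE_zero]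
  | succ n ih =>
      rw [aE_add_one, map_mul, Module.End.mul_apply, rho_a hq]
      have h0 : (AqF q 0) (Finsupp.single (m, jk) r) = Finsupp.single (m + 1, jk) r := by
        simp [AqF, shOp_single]
      rw [h0, ih, show m + 1 + (n : ℤ) = m + ((n : ℤ) + 1) by ring]
  | pred n ih =>
      rw [show -(n : ℤ) - 1 = (-(n : ℤ)) - 1 from rfl, aE_sub_one, map_mul,
        Module.End.mul_apply, rho_ainv hq]
      have h1 : (AqF q 1) (Finsupp.single (m, jk) r) = Finsupp.single (m - 1, jk) r := by
        simp [AqF, shOp_single]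
      rw [h1, ih, show m - 1 + -(n : ℤ) = m + (-(n : ℤ) - 1) by ring]

lemma F3_pow (n : ℕ) (j m : ℕ) :
    ((AqF q 3) ^ n) (Finsupp.single ((0 : ℤ), (j, m)) 1)
      = Finsupp.single ((0 : ℤ), (j, m + n)) 1 := by
  induction n generalizing m with
  | zero => simp
  | succ n ih =>
      rw [pow_succ', Module.End.mul_apply, ih]
      have h3 : (AqF q 3) (Finsupp.single ((0 : ℤ), (j, m + n)) 1)
          = Finsupp.single ((0 : ℤ), (j, m + n + 1)) 1 := by
        simp [AqF, shOp_single]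
      rw [h3, show m + n + 1 = m + (n + 1) by ring]

lemma F2_pow (n : ℕ) (j m : ℕ) :
    ((AqF q 2) ^ n) (Finsupp.single ((0 : ℤ), (j, m)) 1)
      = Finsupp.single ((0 : ℤ), (j + n, m)) 1 := by
  induction n generalizing j with
  | zero => simp
  | succ n ih =>
      rw [pow_succ', Module.End.mul_apply, ih]
      have h2 : (AqF q 2) (Finsupp.single ((0 : ℤ), (j + n, m)) 1)
          = Finsupp.single ((0 : ℤ), (j + n + 1, m)) 1 := by
        simp [AqF, shOp_single]
      rw [h2, show j + n + 1 = j + (n + 1) by ring]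

lemma rho_mono (hq : q ≠ 0) (p : ℤ × ℕ × ℕ) :
    rho hq (mono q p) (Finsupp.single ((0 : ℤ), ((0 : ℕ), (0 : ℕ))) 1)
      = Finsupp.single p 1 := by
  obtain ⟨i, j, k⟩ := p
  rw [mono, map_mul, map_mul, map_pow, map_pow, rho_b hq, rho_c hq,
    Module.End.mul_apply, Module.End.mul_apply, F3_pow, F2_pow, rho_aE_single hq]
  simp

lemma T_injective (hq : q ≠ 0) :
    Function.Injective (Finsupp.linearCombination ℝ (mono q)) := by
  have hΦT : (((LinearMap.applyₗ
        (Finsupp.single ((0 : ℤ), ((0 : ℕ), (0 : ℕ))) (1 : ℝ))).comp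
          (rho hq).toLinearMap).comp (Finsupp.linearCombination ℝ (mono q)))
      = LinearMap.id := by
    apply Finsupp.lhom_ext
    intro p r
    simp only [LinearMap.comp_apply, Finsupp.linearCombination_single, map_smul,
      LinearMap.applyₗ_apply_apply, AlgHom.toLinearMap_apply, LinearMap.smul_apply,
      LinearMap.id_apply, rho_mono hq, Finsupp.smul_single, smul_eq_mul, mul_one]
  intro f g h
  have hf := LinearMap.ext_iff.mp hΦT f
  have hg := LinearMap.ext_iff.mp hΦT g
  simp only [LinearMap.comp_apply, LinearMap.id_apply] at hf hg
  rw [← hf, ← hg, h]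

lemma T_surjective (hq : q ≠ 0) :
    Function.Surjective (Finsupp.linearCombination ℝ (mono q)) := by
  set S : Submodule ℝ (Aq q) := Submodule.span ℝ (Set.range (mono q)) with hS
  have hone : (1 : Aq q) ∈ S := by
    have h1 : mono q (0, 0, 0) = 1 := by simp [mono, aE_zero]
    exact h1 ▸ Submodule.subset_span ⟨(0, 0, 0), rfl⟩
  have hmul : ∀ y : FreeAlgebra ℝ (Fin 4), ∀ s ∈ S, mk q y * s ∈ S := by
    intro y
    induction y using FreeAlgebra.induction with
    | grade0 r =>
        intro s hs
        rw [AlgHom.commutes, ← Algebra.smul_def]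
        exact S.smul_mem r hs
    | grade1 x =>
        intro s hs
        induction hs using Submodule.span_induction with
        | mem z hz =>
            obtain ⟨⟨i, j, k⟩, rfl⟩ := hz
            fin_cases x
            · show mk q (ι ℝ 0) * mono q (i, j, k) ∈ S
              rw [show mk q (ι ℝ 0) = ((aUnit q : Aq q)) from rfl, a_mul_mono]
              exact Submodule.subset_span ⟨_, rfl⟩
            · show mk q (ι ℝ 1) * mono q (i, j, k) ∈ S
              rw [show mk q (ι ℝ 1) = ((((aUnit q)⁻¹ : (Aq q)ˣ)) : Aq q) from rfl,
                ainv_mul_mono]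
              exact Submodule.subset_span ⟨_, rfl⟩
            · show mk q (ι ℝ 2) * mono q (i, j, k) ∈ S
              rw [show mk q (ι ℝ 2) = bE q from rfl, b_mul_mono q hq]
              exact S.smul_mem _ (Submodule.subset_span ⟨_, rfl⟩)
            · show mk q (ι ℝ 3) * mono q (i, j, k) ∈ S
              rw [show mk q (ι ℝ 3) = cE q from rfl, c_mul_mono q hq]
              exact S.smul_mem _ (Submodule.subset_span ⟨_, rfl⟩)
        | zero => rw [mul_zero]; exact S.zero_mem
        | add z w _ _ hz hw => rw [mul_add]; exact S.add_mem hz hw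
        | smul r z _ hz => rw [mul_smul_comm]; exact S.smul_mem r hz
    | mul y z ihy ihz =>
        intro s hs
        rw [map_mul, mul_assoc]
        exact ihy _ (ihz _ hs)
    | add y z ihy ihz =>
        intro s hs
        rw [map_add, add_mul]
        exact S.add_mem (ihy _ hs) (ihz _ hs)
  intro x
  obtain ⟨y, rfl⟩ := RingQuot.mkAlgHom_surjective ℝ (AqRel q) x
  have hx : mk q y ∈ S := by have := hmul y 1 hone; rwa [mul_one] at this
  rw [hS, ← Finsupp.range_linearCombination] at hx
  exact hx

end AqAux

/-- For `q ≠ 0`, the family `{ a^i b^j c^k : i ∈ ℤ, j, k ∈ ℕ }` is a basis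
of `A_q` over `ℝ`: the linear map from the free `ℝ`-module on `ℤ × ℕ × ℕ` sending the basis
vector at `(i, j, k)` to `a^i · b^j · c^k` is bijective. -/
theorem Aq_pbw_basis (q : ℝ) (hq : q ≠ 0) :
    Function.Bijective
      (Finsupp.linearCombination ℝ (fun p : ℤ × ℕ × ℕ =>
        ((aUnit q ^ p.1 : (Aq q)ˣ) : Aq q) *
          (RingQuot.mkAlgHom ℝ (AqRel q) (ι ℝ 2)) ^ p.2.1 *
          (RingQuot.mkAlgHom ℝ (AqRel q) (ι ℝ 3)) ^ p.2.2)) := by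
  exact ⟨AqAux.T_injective hq, AqAux.T_surjective hq⟩
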